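/- Assume X_A and X_B are conditionally independent given Y and that Pr[Y=y|X_B=x_B] > 0 for all x_B, y. Then for every reporting strategy ŝ : Σ_A → Δ_Σ, one has Σ_{x_A,x_B} Pr[X_A=x_A, X_B=x_B]·log(Σ_y ŝ(x_A)(y)·Pr[Y=y|X_B=x_B]/Pr[Y=y]) ≤ I(X_A;X_B), where I(X_A;X_B) = Σ_{x_A,x_B} Pr[X_A=x_A, X_B=x_B]·log(Pr[X_A=x_A, X_B=x_B]/(Pr[X_A=x_A]·Pr[X_B=x_B])). That is, given that Bob reports truthfully, Alice's expected payment in the common ground mechanism is at most the Shannon mutual information, which she attains by truthful reporting. -/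

import Mathlib

noncomputable section

variable {SA SB S : Type*}

/-- Joint probability `Pr[X_A = a, X_B = b]` induced by the joint pmf `ν` of `(X_A, X_B, Y)`. -/
def jAB [Fintype S] (ν : SA → SB → S → ℝ) (a : SA) (b : SB) : ℝ := ∑ y, ν a b y

/-- Joint probability `Pr[X_A = a, Y = y]`. -/
def jAY [Fintype SB] (ν : SA → SB → S → ℝ) (a : SA) (y : S) : ℝ := ∑ b, ν a b y

/-- Joint probability `Pr[X_B = b, Y = y]`. -/
def jBY [Fintype SA] (ν : SA → SB → S → ℝ) (b : SB) (y : S) : ℝ := ∑ a, ν a b y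

/-- Marginal probability `Pr[X_A = a]`. -/
def prA [Fintype SB] [Fintype S] (ν : SA → SB → S → ℝ) (a : SA) : ℝ := ∑ b, ∑ y, ν a b y

/-- Marginal probability `Pr[X_B = b]`. -/
def prB [Fintype SA] [Fintype S] (ν : SA → SB → S → ℝ) (b : SB) : ℝ := ∑ a, ∑ y, ν a b y

/-- Marginal probability `Pr[Y = y]`. -/
def prY [Fintype SA] [Fintype SB] (ν : SA → SB → S → ℝ) (y : S) : ℝ := ∑ a, ∑ b, ν a b y

/-- Pointwise mutual information `K(a,b) = Pr[a,b]/(Pr[a]·Pr[b])`. -/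
def K [Fintype SA] [Fintype SB] [Fintype S] (ν : SA → SB → S → ℝ) (a : SA) (b : SB) : ℝ :=
  jAB ν a b / (prA ν a * prB ν b)

/-- Conditional probability `Pr[Y = y | X_A = a]`. -/
def condA [Fintype SB] [Fintype S] (ν : SA → SB → S → ℝ) (a : SA) (y : S) : ℝ :=
  jAY ν a y / prA ν a

/-- Conditional probability `Pr[Y = y | X_B = b]`. -/
def condB [Fintype SA] [Fintype S] (ν : SA → SB → S → ℝ) (b : SB) (y : S) : ℝ :=
  jBY ν b y / prB ν b

/-- `X_A` and `X_B` are conditionally independent given `Y`: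
`Pr[a, b | y] = Pr[a | y] · Pr[b | y]` for all `a, b, y`. -/
def CondIndep [Fintype SA] [Fintype SB] (ν : SA → SB → S → ℝ) : Prop :=
  ∀ a b y, ν a b y / prY ν y = (jAY ν a y / prY ν y) * (jBY ν b y / prY ν y)

/-- `ν` is a probability mass function. -/
def IsPMF [Fintype SA] [Fintype SB] [Fintype S] (ν : SA → SB → S → ℝ) : Prop :=
  (∀ a b y, 0 ≤ ν a b y) ∧ ∑ a, ∑ b, ∑ y, ν a b y = 1

/-- `p` is a probability vector: nonnegative entries summing to `1`. -/
def IsProbVec {T : Type*} [Fintype T] (p : T → ℝ) : Prop := (∀ t, 0 ≤ p t) ∧ ∑ t, p t = 1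

/-- The convex conjugate `f*(x) = sup_t (t·x − f(t))`, as a real-valued supremum. -/
def fconj (f : ℝ → ℝ) (x : ℝ) : ℝ := sSup (Set.range fun t => t * x - f t)

/-- `c` is a subgradient of `f` at `t`: `f(s) ≥ f(t) + c·(s − t)` for all `s`. -/
def IsSubgradientAt (f : ℝ → ℝ) (t c : ℝ) : Prop := ∀ s : ℝ, f t + c * (s - t) ≤ f s

/-- The f-mutual information `MI^f(X_A;X_B) = Σ_{a,b} Pr[a]·Pr[b]·f(K(a,b))`. -/
def MIf [Fintype SA] [Fintype SB] [Fintype S] (f : ℝ → ℝ) (ν : SA → SB → S → ℝ) : ℝ :=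
  ∑ a, ∑ b, prA ν a * prB ν b * f (K ν a b)

/-- The agreement `g(a,b) = Σ_y h_A(a)(y)·h_B(b)(y)/p(y)`. -/
def gagr [Fintype S] (hA : SA → S → ℝ) (hB : SB → S → ℝ) (p : S → ℝ) (a : SA) (b : SB) : ℝ :=
  ∑ y, hA a y * hB b y / p y

/-- Expected `f`-mutual information gain
`MIG^f(h_A,h_B,p) = Σ Pr[a,b]·f'(g(a,b)) − Σ Pr[a]·Pr[b]·f*(f'(g(a,b)))`. -/
def MIG [Fintype SA] [Fintype SB] [Fintype S] (f : ℝ → ℝ) (ν : SA → SB → S → ℝ)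
    (hA : SA → S → ℝ) (hB : SB → S → ℝ) (p : S → ℝ) : ℝ :=
  ∑ a, ∑ b, jAB ν a b * deriv f (gagr hA hB p a b)
    - ∑ a, ∑ b, prA ν a * prB ν b * fconj f (deriv f (gagr hA hB p a b))

/-- Each agent's expected payment in the multi-task common ground mechanism `MCG(f)`. -/
def Pay [Fintype SA] [Fintype SB] [Fintype S] (f : ℝ → ℝ) (ν : SA → SB → S → ℝ)
    (sA : SA → S → ℝ) (sB : SB → S → ℝ) : ℝ :=
  MIG f ν sA sB (prY ν)

/-- `({a^{x_A}}, {b^{x_B}}, r)` is a solution of the agreement system: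
probability vectors, `r` strictly positive, with
`Σ_y a^{x_A}(y)·b^{x_B}(y)/r(y) = K(x_A,x_B)` for all `x_A, x_B`. -/
def AgreementSolution [Fintype SA] [Fintype SB] [Fintype S] (ν : SA → SB → S → ℝ)
    (a : SA → S → ℝ) (b : SB → S → ℝ) (r : S → ℝ) : Prop :=
  (∀ xa, IsProbVec (a xa)) ∧ (∀ xb, IsProbVec (b xb)) ∧ IsProbVec r ∧ (∀ y, 0 < r y) ∧
    ∀ xa xb, (∑ y, a xa y * b xb y / r y) = K ν xa xb

/-- The prior is well-defined: any two solutions of the agreement system coincide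
up to a permutation of `Σ`. -/
def WellDefinedPrior [Fintype SA] [Fintype SB] [Fintype S] (ν : SA → SB → S → ℝ) : Prop :=
  ∀ (a : SA → S → ℝ) (b : SB → S → ℝ) (r : S → ℝ)
    (c : SA → S → ℝ) (d : SB → S → ℝ) (r' : S → ℝ),
    AgreementSolution ν a b r → AgreementSolution ν c d r' →
    ∃ π : Equiv.Perm S, ∀ y, r (π y) = r' y ∧ (∀ xa, a xa (π y) = c xa y)
      ∧ (∀ xb, b xb (π y) = d xb y)

/-- The prior is stable: fixing the truthful `A`-side (resp. `B`-side) of the agreement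
system, the only solution for the other side is the truthful one. -/
def StablePrior [Fintype SA] [Fintype SB] [Fintype S] (ν : SA → SB → S → ℝ) : Prop :=
  (∀ b : SB → S → ℝ, (∀ xb, IsProbVec (b xb)) →
    (∀ xa xb, (∑ y, condA ν xa y * b xb y / prY ν y) = K ν xa xb) →
    ∀ xb y, b xb y = condB ν xb y) ∧
  (∀ a : SA → S → ℝ, (∀ xa, IsProbVec (a xa)) →
    (∀ xa xb, (∑ y, a xa y * condB ν xb y / prY ν y) = K ν xa xb) →
    ∀ xa y, a xa y = condA ν xa y)

/-- In the common ground mechanism with a truthful Bob, under conditional independence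
(and positive posteriors `Pr[Y=y|X_B=b] > 0`), every reporting strategy of Alice earns
expected payment at most the Shannon mutual information `I(X_A;X_B)`, which Alice
attains by truthful reporting. -/
theorem stmt_12 [Fintype SA] [Fintype SB] [Fintype S] [Nonempty SA] [Nonempty SB] [Nonempty S]
    (ν : SA → SB → S → ℝ) (hν : IsPMF ν)
    (hAB : ∀ a b, 0 < jAB ν a b) (hY : ∀ y, 0 < prY ν y)
    (hci : CondIndep ν) (hBY : ∀ b y, 0 < condB ν b y) :
    (∀ s : SA → S → ℝ, (∀ a, IsProbVec (s a)) →
      ∑ a, ∑ b, jAB ν a b * Real.log (∑ y, s a y * condB ν b y / prY ν y)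
        ≤ ∑ a, ∑ b, jAB ν a b * Real.log (jAB ν a b / (prA ν a * prB ν b)))
    ∧ ∑ a, ∑ b, jAB ν a b * Real.log (∑ y, condA ν a y * condB ν b y / prY ν y)
        = ∑ a, ∑ b, jAB ν a b * Real.log (jAB ν a b / (prA ν a * prB ν b)) := by
  obtain ⟨hν0, hν1⟩ := hν
  have hprA : ∀ a, 0 < prA ν a := by
    intro a
    have : prA ν a = ∑ b, jAB ν a b := rfl
    rw [this]
    exact Finset.sum_pos (fun b _ => hAB a b) Finset.univ_nonempty
  have hprB : ∀ b, 0 < prB ν b := by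
    intro b
    have : prB ν b = ∑ a, jAB ν a b := rfl
    rw [this]
    exact Finset.sum_pos (fun a _ => hAB a b) Finset.univ_nonempty
  have hK : ∀ a b, 0 < K ν a b := fun a b =>
    div_pos (hAB a b) (mul_pos (hprA a) (hprB b))
  have hν_eq : ∀ a b y, ν a b y = jAY ν a y * jBY ν b y / prY ν y := by
    intro a b y
    have hy := (hY y).ne'
    have h := hci a b y
    calc ν a b y = ν a b y / prY ν y * prY ν y := (div_mul_cancel₀ _ hy).symm
      _ = jAY ν a y / prY ν y * (jBY ν b y / prY ν y) * prY ν y := by rw [h]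
      _ = jAY ν a y * jBY ν b y / prY ν y := by field_simp [hy]
  have hPB : ∀ y, ∑ b, prB ν b * condB ν b y = prY ν y := by
    intro y
    have h1 : ∀ b, prB ν b * condB ν b y = jBY ν b y := by
      intro b
      rw [condB]
      field_simp [(hprB b).ne']
    rw [Finset.sum_congr rfl fun b _ => h1 b]
    show (∑ b, ∑ a, ν a b y) = ∑ a, ∑ b, ν a b y
    exact Finset.sum_comm
  have key : ∀ a b, (∑ y, condA ν a y * condB ν b y / prY ν y) = K ν a b := by
    intro a b
    have h1 : ∀ y, condA ν a y * condB ν b y / prY ν y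
        = ν a b y / (prA ν a * prB ν b) := by
      intro y
      rw [condA, condB, hν_eq a b y]
      have hy := (hY y).ne'
      have ha := (hprA a).ne'
      have hb := (hprB b).ne'
      field_simp [hy, ha, hb]
      try ring
      try exact Or.inl trivial
    rw [Finset.sum_congr rfl fun y _ => h1 y, ← Finset.sum_div]
    rfl
  have hsumA : (∑ a, prA ν a) = 1 := hν1
  constructor
  · intro s hs
    have hg : ∀ a b, 0 < ∑ y, s a y * condB ν b y / prY ν y := by
      intro a b
      obtain ⟨y0, hy0⟩ : ∃ y, 0 < s a y := by
        by_contra h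
        push_neg at h
        have hz : (∑ y, s a y) = 0 :=
          Finset.sum_eq_zero fun y _ => le_antisymm (h y) ((hs a).1 y)
        rw [(hs a).2] at hz
        norm_num at hz
      refine Finset.sum_pos' (fun y _ => ?_) ⟨y0, Finset.mem_univ y0, ?_⟩
      · exact div_nonneg (mul_nonneg ((hs a).1 y) (hBY b y).le) (hY y).le
      · exact div_pos (mul_pos hy0 (hBY b y0)) (hY y0)
    have hga : ∀ a, (∑ b, prB ν b * (∑ y, s a y * condB ν b y / prY ν y)) = 1 := by
      intro a
      have h1 : ∀ b, prB ν b * (∑ y, s a y * condB ν b y / prY ν y)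
          = ∑ y, s a y / prY ν y * (prB ν b * condB ν b y) := by
        intro b
        rw [Finset.mul_sum]
        exact Finset.sum_congr rfl fun y _ => by ring
      rw [Finset.sum_congr rfl fun b _ => h1 b, Finset.sum_comm]
      have h2 : ∀ y, (∑ b, s a y / prY ν y * (prB ν b * condB ν b y)) = s a y := by
        intro y
        rw [← Finset.mul_sum, hPB y]
        exact div_mul_cancel₀ _ (hY y).ne'
      rw [Finset.sum_congr rfl fun y _ => h2 y, (hs a).2]
    have hS1 : (∑ a, ∑ b, prA ν a * prB ν b * (∑ y, s a y * condB ν b y / prY ν y)) = 1 := by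
      have h1 : ∀ a, (∑ b, prA ν a * prB ν b * (∑ y, s a y * condB ν b y / prY ν y))
          = prA ν a := by
        intro a
        calc (∑ b, prA ν a * prB ν b * (∑ y, s a y * condB ν b y / prY ν y))
            = prA ν a * ∑ b, prB ν b * (∑ y, s a y * condB ν b y / prY ν y) := by
              rw [Finset.mul_sum]
              exact Finset.sum_congr rfl fun b _ => by ring
          _ = prA ν a := by rw [hga a, mul_one]
      rw [Finset.sum_congr rfl fun a _ => h1 a]
      exact hsumA
    have hSj : (∑ a, ∑ b, jAB ν a b) = 1 := hν1
    have main : ∀ a b, jAB ν a b * Real.log (∑ y, s a y * condB ν b y / prY ν y)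
        ≤ jAB ν a b * Real.log (K ν a b)
          + (prA ν a * prB ν b * (∑ y, s a y * condB ν b y / prY ν y) - jAB ν a b) := by
      intro a b
      set g := ∑ y, s a y * condB ν b y / prY ν y with hgdef
      have hlog := Real.log_le_sub_one_of_pos (div_pos (hg a b) (hK a b))
      rw [Real.log_div (hg a b).ne' (hK a b).ne'] at hlog
      have h := mul_le_mul_of_nonneg_left hlog (hAB a b).le
      have e1 : jAB ν a b * (g / K ν a b - 1) = prA ν a * prB ν b * g - jAB ν a b := by
        rw [K]
        have ha := (hprA a).ne'
        have hb := (hprB b).ne'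
        have hj := (hAB a b).ne'
        field_simp
      calc jAB ν a b * Real.log g
          = jAB ν a b * Real.log (K ν a b)
            + jAB ν a b * (Real.log g - Real.log (K ν a b)) := by ring
        _ ≤ jAB ν a b * Real.log (K ν a b) + jAB ν a b * (g / K ν a b - 1) :=
            add_le_add_right h _
        _ = jAB ν a b * Real.log (K ν a b)
            + (prA ν a * prB ν b * g - jAB ν a b) := by rw [e1]
    calc (∑ a, ∑ b, jAB ν a b * Real.log (∑ y, s a y * condB ν b y / prY ν y))
        ≤ ∑ a, ∑ b, (jAB ν a b * Real.log (K ν a b)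
            + (prA ν a * prB ν b * (∑ y, s a y * condB ν b y / prY ν y) - jAB ν a b)) :=
          Finset.sum_le_sum fun a _ => Finset.sum_le_sum fun b _ => main a b
      _ = (∑ a, ∑ b, jAB ν a b * Real.log (K ν a b))
          + ((∑ a, ∑ b, prA ν a * prB ν b * (∑ y, s a y * condB ν b y / prY ν y))
            - ∑ a, ∑ b, jAB ν a b) := by
          simp only [Finset.sum_add_distrib, Finset.sum_sub_distrib]
      _ = ∑ a, ∑ b, jAB ν a b * Real.log (jAB ν a b / (prA ν a * prB ν b)) := by
          rw [hS1, hSj]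
          simp [K]
  · refine Finset.sum_congr rfl fun a _ => Finset.sum_congr rfl fun b _ => ?_
    rw [key a b]
    rfl
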